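/- (Gaussian collapse in rescaled time, mean-field regime.) Fix 0 ≤ α < 1/2 and τ ∈ ℝ. Then lim_{N→∞} P_{N,α}(τ √N) = exp(−2(1−α)² τ² / (1−2α)). In particular, in rescaled time τ = t N^{−1/2} the expectation value ⟨A⟩ relaxes to the equilibrium value 0 with an N-independent Gaussian profile. -/

import Mathlib

/-- Kac normalization `𝒩_α(N) = (2 ∑_{j=1}^{⌊N/2⌋} j^{−α})⁻¹`. -/
noncomputable def kacNorm (α : ℝ) (N : ℕ) : ℝ :=
  (2 * ∑ j ∈ Finset.Icc 1 (N / 2), (j : ℝ) ^ (-α))⁻¹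

/-- The relaxation product `P_{N,α}(t) = ∏_{j=1}^{⌊N/2⌋} cos²(2 𝒩_α(N) t j^{−α})`. -/
noncomputable def relaxProd (α : ℝ) (N : ℕ) (t : ℝ) : ℝ :=
  ∏ j ∈ Finset.Icc 1 (N / 2), Real.cos (2 * kacNorm α N * t * (j : ℝ) ^ (-α)) ^ 2


open Filter Finset


lemma aux_logcos {x : ℝ} (hx : |x| ≤ 1/2) :
    |2 * Real.log (Real.cos x) + x^2| ≤ 2 * x^4 := by
  have hx1 : |x| ≤ 1 := hx.trans (by norm_num)
  have hb := Real.cos_bound hx1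
  have habs : |x|^4 = x^4 := by
    rw [← abs_pow, abs_of_nonneg (by positivity)]
  rw [habs] at hb
  have hbl := (abs_le.1 hb).1
  have hbu := (abs_le.1 hb).2
  have hx2 : x^2 ≤ 1/4 := by
    have h := abs_le.1 hx
    nlinarith [h.1, h.2]
  have hx4 : x^4 ≤ 1/16 := by nlinarith [sq_nonneg x]
  have hc : (3:ℝ)/4 ≤ Real.cos x := by nlinarith
  have hcpos : 0 < Real.cos x := by linarith
  have hup := Real.log_le_sub_one_of_pos hcpos
  have hlo := Real.one_sub_inv_le_log_of_pos hcpos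
  have hinv : (Real.cos x)⁻¹ ≤ 1 + x^2/2 + x^4 := by
    rw [inv_le_iff_one_le_mul₀ hcpos]
    nlinarith [sq_nonneg x, sq_nonneg (x^2)]
  rw [abs_le]
  constructor
  · nlinarith [sq_nonneg x, sq_nonneg (x^2)]
  · nlinarith [sq_nonneg x, sq_nonneg (x^2)]


lemma aux_sum_tendsto {β : ℝ} (h0 : 0 ≤ β) (h1 : β < 1) :
    Tendsto (fun M : ℕ => (∑ j ∈ Finset.Icc 1 M, (j:ℝ) ^ (-β)) / (M:ℝ) ^ (1-β))
      atTop (nhds (1/(1-β))) := by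
  have h1β : (0:ℝ) < 1 - β := by linarith
  -- antitone
  have hant : ∀ n : ℕ, AntitoneOn (fun x : ℝ => x ^ (-β)) (Set.Icc (1:ℝ) (1 + n)) := by
    intro n a ha b hb hab
    exact Real.rpow_le_rpow_of_nonpos (lt_of_lt_of_le one_pos ha.1) hab (neg_nonpos.2 h0)
  -- integral value
  have hint : ∀ n : ℕ, (∫ x in (1:ℝ)..(1 + (n:ℝ)), x ^ (-β)) = ((1+(n:ℝ))^(1-β) - 1)/(1-β) := by
    intro n
    rw [integral_rpow (Or.inl (by linarith : (-1:ℝ) < -β))]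
    rw [Real.one_rpow, show -β + 1 = 1 - β by ring]
  -- reindex
  have hre : ∀ M : ℕ, ∑ j ∈ Finset.Icc 1 M, (j:ℝ)^(-β) = ∑ i ∈ Finset.range M, (1+(i:ℝ))^(-β) := by
    intro M
    rw [← Finset.Ico_add_one_right_eq_Icc, Finset.sum_Ico_eq_sum_range, Nat.add_sub_cancel]
    exact Finset.sum_congr rfl (by intro i _; push_cast; ring_nf)
  -- lower bound
  have hlow : ∀ M : ℕ, ((1+(M:ℝ))^(1-β) - 1)/(1-β) ≤ ∑ j ∈ Finset.Icc 1 M, (j:ℝ)^(-β) := by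
    intro M
    have h := (hant M).integral_le_sum
    rw [hint M] at h
    rw [hre M]
    exact h
  -- upper bound
  have hup : ∀ m : ℕ, ∑ j ∈ Finset.Icc 1 (m+1), (j:ℝ)^(-β) ≤ 1 + (((m+1:ℕ):ℝ)^(1-β) - 1)/(1-β) := by
    intro m
    have h := (hant m).sum_le_integral
    rw [hint m] at h
    rw [hre (m+1), Finset.sum_range_succ']
    have e0 : (1 + ((0:ℕ):ℝ))^(-β) = 1 := by norm_num
    rw [e0]
    have : ∑ i ∈ Finset.range m, (1+((i+1:ℕ):ℝ))^(-β)
        ≤ ((1+(m:ℝ))^(1-β) - 1)/(1-β) := by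
      refine le_trans (le_of_eq ?_) h
      exact Finset.sum_congr rfl (by intro i _; push_cast; ring_nf)
    rw [show (1:ℝ)+(m:ℝ) = (m:ℝ)+1 by ring] at this
    push_cast
    push_cast at this
    linarith
  -- limit helpers
  have hA : Tendsto (fun M : ℕ => ((M:ℝ))^(β-1)) atTop (nhds 0) := by
    have := (tendsto_rpow_neg_atTop h1β).comp (tendsto_natCast_atTop_atTop (R := ℝ))
    simpa [Function.comp_def, show -(1-β) = β - 1 by ring] using this
  have hB : Tendsto (fun M : ℕ => ((1+(M:ℝ))/M)^(1-β)) atTop (nhds 1) := by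
    have h1' : Tendsto (fun M : ℕ => (1+(M:ℝ))/M) atTop (nhds 1) := by
      have h2 := tendsto_one_div_atTop_nhds_zero_nat.add
        (tendsto_const_nhds : Tendsto (fun _ : ℕ => (1:ℝ)) atTop (nhds 1))
      rw [zero_add] at h2
      apply Tendsto.congr' ?_ h2
      filter_upwards [eventually_ge_atTop 1] with M hM
      have hM0 : (M:ℝ) ≠ 0 := by positivity
      field_simp
    have := h1'.rpow_const (Or.inr h1β.le)
    simpa using this
  have hlf : Tendsto (fun M : ℕ => (((1+(M:ℝ))/M)^(1-β) - (M:ℝ)^(β-1))/(1-β))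
      atTop (nhds (1/(1-β))) := by
    have := (hB.sub hA).div_const (1-β)
    simpa using this
  have huf : Tendsto (fun M : ℕ => (M:ℝ)^(β-1) + (1 - (M:ℝ)^(β-1))/(1-β))
      atTop (nhds (1/(1-β))) := by
    have := hA.add (((tendsto_const_nhds : Tendsto (fun _ : ℕ => (1:ℝ)) atTop (nhds 1)).sub hA).div_const (1-β))
    simpa using this
  refine tendsto_of_tendsto_of_tendsto_of_le_of_le' hlf huf ?_ ?_
  · filter_upwards [eventually_ge_atTop 1] with M hM
    have hMpos : (0:ℝ) < M := by exact_mod_cast hM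
    have hP : (0:ℝ) < (M:ℝ)^(1-β) := Real.rpow_pos_of_pos hMpos _
    rw [le_div_iff₀ hP]
    have e1 : ((1+(M:ℝ))/M)^(1-β) = (1+(M:ℝ))^(1-β) / (M:ℝ)^(1-β) :=
      Real.div_rpow (by positivity) hMpos.le _
    have e2 : (M:ℝ)^(β-1) * (M:ℝ)^(1-β) = 1 := by
      rw [← Real.rpow_add hMpos]; norm_num
    have key : (((1+(M:ℝ))/M)^(1-β) - (M:ℝ)^(β-1)) * (M:ℝ)^(1-β)
        = (1+(M:ℝ))^(1-β) - 1 := by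
      rw [sub_mul, e1, div_mul_cancel₀ _ hP.ne', e2]
    rw [div_mul_eq_mul_div, key]
    exact hlow M
  · filter_upwards [eventually_ge_atTop 1] with M hM
    have hMpos : (0:ℝ) < M := by exact_mod_cast hM
    have hP : (0:ℝ) < (M:ℝ)^(1-β) := Real.rpow_pos_of_pos hMpos _
    have e2 : (M:ℝ)^(β-1) * (M:ℝ)^(1-β) = 1 := by
      rw [← Real.rpow_add hMpos]; norm_num
    have hup' : ∑ j ∈ Finset.Icc 1 M, (j:ℝ)^(-β) ≤ 1 + ((M:ℝ)^(1-β) - 1)/(1-β) := by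
      obtain ⟨m, rfl⟩ := Nat.exists_eq_succ_of_ne_zero (by omega : M ≠ 0)
      exact_mod_cast hup m
    rw [div_le_iff₀ hP]
    have key2 : ((M:ℝ)^(β-1) + (1 - (M:ℝ)^(β-1))/(1-β)) * (M:ℝ)^(1-β)
        = 1 + ((M:ℝ)^(1-β) - 1)/(1-β) := by
      rw [add_mul, e2, div_mul_eq_mul_div, sub_mul, one_mul, e2]
    rw [key2]
    exact hup'

noncomputable def auxS (α : ℝ) (N : ℕ) : ℝ := ∑ j ∈ Finset.Icc 1 (N/2), (j:ℝ)^(-α)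
noncomputable def auxT (α : ℝ) (N : ℕ) : ℝ := ∑ j ∈ Finset.Icc 1 (N/2), (j:ℝ)^(-(2*α))
noncomputable def auxc (α τ : ℝ) (N : ℕ) : ℝ := τ * Real.sqrt N / auxS α N
noncomputable def auxG (α τ : ℝ) (N : ℕ) : ℝ :=
  ∑ j ∈ Finset.Icc 1 (N/2), 2 * Real.log (Real.cos (auxc α τ N * (j:ℝ)^(-α)))


section
variable {α τ : ℝ} (hα0 : 0 ≤ α) (hα1 : α < 1/2)

lemma hMtop : Tendsto (fun N : ℕ => N / 2) atTop atTop :=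
  tendsto_atTop_atTop.2 fun b => ⟨2*b, fun N hN => by omega⟩

include hα0 hα1 in
lemma hQ_tendsto (τ : ℝ) : Tendsto (fun N => (auxc α τ N)^2 * auxT α N) atTop
    (nhds (2*(1-α)^2*τ^2/(1-2*α))) := by
  have h1α : (0:ℝ) < 1 - α := by linarith
  have h12α : (0:ℝ) < 1 - 2*α := by linarith
  have hSα := (aux_sum_tendsto hα0 (by linarith : α < 1)).comp hMtop
  have hT := (aux_sum_tendsto (by linarith : (0:ℝ) ≤ 2*α) (by linarith : 2*α < 1)).comp hMtop
  -- ratio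
  have hRatio : Tendsto (fun N : ℕ => ((N/2 : ℕ):ℝ)/(N:ℝ)) atTop (nhds (1/2)) := by
    have hl : Tendsto (fun N : ℕ => 1/2 - 1/(2*(N:ℝ))) atTop (nhds (1/2)) := by
      have : Tendsto (fun N : ℕ => 1/(2*(N:ℝ))) atTop (nhds 0) := by
        have := tendsto_one_div_atTop_nhds_zero_nat.div_const (2:ℝ)
        simpa [one_div, mul_comm] using this.congr fun N => by
          rw [div_div]; ring_nf
      simpa using (tendsto_const_nhds : Tendsto (fun _:ℕ => (1/2:ℝ)) atTop (nhds (1/2))).sub this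
    refine tendsto_of_tendsto_of_tendsto_of_le_of_le' hl tendsto_const_nhds ?_ ?_
    · filter_upwards [eventually_ge_atTop 1] with N hN
      have hNpos : (0:ℝ) < N := by exact_mod_cast hN
      rw [le_div_iff₀ hNpos, sub_mul]
      have h1 : (N:ℝ) - 1 ≤ 2*((N/2:ℕ):ℝ) := by
        have : N - 1 ≤ 2*(N/2) := by omega
        exact_mod_cast this
      have h2 : 1/(2*(N:ℝ)) * (N:ℝ) = 1/2 := by field_simp
      nlinarith
    · filter_upwards [eventually_ge_atTop 1] with N hN
      have hNpos : (0:ℝ) < N := by exact_mod_cast hN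
      rw [div_le_iff₀ hNpos]
      have h1 : 2*((N/2:ℕ):ℝ) ≤ (N:ℝ) := by
        have : 2*(N/2) ≤ N := by omega
        exact_mod_cast this
      linarith
  have hNM : Tendsto (fun N : ℕ => (N:ℝ)/((N/2:ℕ):ℝ)) atTop (nhds 2) := by
    have h := hRatio.inv₀ (by norm_num)
    rw [show ((1:ℝ)/2)⁻¹ = 2 by norm_num] at h
    exact h.congr fun N => by rw [inv_div]
  simp only [Function.comp_def] at hSα hT
  have hval : τ^2 * 2 * (1/(1-2*α)) / ((1/(1-α))^2) = 2*(1-α)^2*τ^2/(1-2*α) := by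
    field_simp
  have hQ' : Tendsto (fun N : ℕ =>
      τ^2 * ((N:ℝ)/((N/2:ℕ):ℝ)) * (auxT α N / ((N/2:ℕ):ℝ)^(1-2*α))
        / (auxS α N / ((N/2:ℕ):ℝ)^(1-α))^2) atTop (nhds (2*(1-α)^2*τ^2/(1-2*α))) := by
    have h := ((tendsto_const_nhds : Tendsto (fun _:ℕ => τ^2) atTop (nhds (τ^2))).mul hNM
      |>.mul hT).div (hSα.pow 2) (pow_ne_zero _ (one_div_ne_zero h1α.ne'))
    rw [hval] at h
    exact h
  refine hQ'.congr' ?_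
  filter_upwards [eventually_ge_atTop 2] with N hN
  have hM1 : 1 ≤ N/2 := by omega
  have hM0 : 0 < N/2 := hM1
  have hMpos : (0:ℝ) < ((N/2:ℕ):ℝ) := by exact_mod_cast hM0
  have hNpos : (0:ℝ) < (N:ℝ) := by positivity
  have hSpos : 0 < auxS α N := by
    apply Finset.sum_pos (fun j hj => ?_) ⟨1, by simp [Finset.mem_Icc, hM1]⟩
    have : (0:ℝ) < j := by exact_mod_cast (Finset.mem_Icc.1 hj).1
    positivity
  have hP1 : (0:ℝ) < ((N/2:ℕ):ℝ)^(1-α) := Real.rpow_pos_of_pos hMpos _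
  have hP2 : (0:ℝ) < ((N/2:ℕ):ℝ)^(1-2*α) := Real.rpow_pos_of_pos hMpos _
  have epow : (((N/2:ℕ):ℝ)^(1-α))^2 = ((N/2:ℕ):ℝ) * ((N/2:ℕ):ℝ)^(1-2*α) := by
    rw [sq, ← Real.rpow_add hMpos, show (1-α)+(1-α) = 1 + (1-2*α) by ring,
      Real.rpow_add hMpos, Real.rpow_one]
  have hc2 : (auxc α τ N)^2 = τ^2 * N / (auxS α N)^2 := by
    rw [auxc, div_pow, mul_pow, Real.sq_sqrt (by positivity : (0:ℝ) ≤ (N:ℝ))]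
  rw [div_pow, epow, hc2]
  field_simp


include hα0 hα1 in
lemma habs_tendsto (τ : ℝ) : Tendsto (fun N => |auxc α τ N|) atTop (nhds 0) := by
  have h12α : (0:ℝ) < 1 - 2*α := by linarith
  have hT := (aux_sum_tendsto (by linarith : (0:ℝ) ≤ 2*α) (by linarith : 2*α < 1)).comp hMtop
  simp only [Function.comp_def] at hT
  have hTtop : Tendsto (auxT α) atTop atTop := by
    have hMr : Tendsto (fun N : ℕ => ((N/2:ℕ):ℝ)^(1-2*α)) atTop atTop :=
      (tendsto_rpow_atTop h12α).comp (tendsto_natCast_atTop_atTop.comp hMtop)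
    have h := Tendsto.pos_mul_atTop (show (0:ℝ) < 1/(1-2*α) by positivity) hT hMr
    refine Tendsto.congr' ?_ h
    filter_upwards [eventually_ge_atTop 2] with N hN
    have hM0 : 0 < N/2 := by omega
    have hMpos : (0:ℝ) < ((N/2:ℕ):ℝ) := by exact_mod_cast hM0
    have : ((N/2:ℕ):ℝ)^(1-2*α) ≠ 0 := (Real.rpow_pos_of_pos hMpos _).ne'
    rw [div_mul_cancel₀ _ this]
    rfl
  have hc2T : Tendsto (fun N => (auxc α τ N)^2) atTop (nhds 0) := by
    have h := Tendsto.div_atTop (hQ_tendsto hα0 hα1 τ) hTtop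
    refine Tendsto.congr' ?_ h
    filter_upwards [hTtop.eventually_ge_atTop 1] with N hN
    rw [mul_div_assoc, div_self (by linarith : auxT α N ≠ 0), mul_one]
  have := hc2T.sqrt
  rw [Real.sqrt_zero] at this
  exact this.congr fun N => Real.sqrt_sq_eq_abs _

end

/-- Gaussian collapse in rescaled time, mean-field regime: for `0 ≤ α < 1/2`,
`P_{N,α}(τ √N) → exp(−2(1−α)² τ² / (1−2α))` as `N → ∞`. -/
theorem stmt_9 (α : ℝ) (hα0 : 0 ≤ α) (hα1 : α < 1 / 2) (τ : ℝ) :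
    Filter.Tendsto (fun N : ℕ => relaxProd α N (τ * Real.sqrt N)) Filter.atTop
      (nhds (Real.exp (-2 * (1 - α) ^ 2 * τ ^ 2 / (1 - 2 * α)))) := by
  have hQ := hQ_tendsto hα0 hα1 τ
  have habs := habs_tendsto hα0 hα1 τ
  have hc2 : Tendsto (fun N => (auxc α τ N)^2) atTop (nhds 0) := by
    have := (habs.pow 2)
    simp only [ne_eq, OfNat.ofNat_ne_zero, not_false_eq_true, zero_pow] at this
    exact this.congr fun N => by rw [sq_abs]
  have hhalf : ∀ᶠ N in atTop, |auxc α τ N| ≤ 1/2 :=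
    habs.eventually_le_const (by norm_num)
  -- per-j facts
  have hjfacts : ∀ N : ℕ, |auxc α τ N| ≤ 1/2 → ∀ j ∈ Finset.Icc 1 (N/2),
      |auxc α τ N * (j:ℝ)^(-α)| ≤ 1/2 ∧ ((j:ℝ)^(-α))^2 = (j:ℝ)^(-(2*α)) := by
    intro N hN j hj
    have hj1 : (1:ℝ) ≤ (j:ℝ) := by exact_mod_cast (Finset.mem_Icc.1 hj).1
    have hr1 : (j:ℝ)^(-α) ≤ 1 :=
      Real.rpow_le_one_of_one_le_of_nonpos hj1 (neg_nonpos.2 hα0)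
    have hr0 : (0:ℝ) < (j:ℝ)^(-α) := Real.rpow_pos_of_pos (by linarith) _
    constructor
    · rw [abs_mul, abs_of_pos hr0]
      calc |auxc α τ N| * (j:ℝ)^(-α) ≤ |auxc α τ N| * 1 := by
            exact mul_le_mul_of_nonneg_left hr1 (abs_nonneg _)
        _ ≤ 1/2 := by rw [mul_one]; exact hN
    · rw [← Real.rpow_natCast ((j:ℝ)^(-α)) 2, ← Real.rpow_mul (by linarith : (0:ℝ) ≤ (j:ℝ))]
      norm_num
      ring_nf
  -- c² T as a sum of squares
  have hQsum : ∀ N : ℕ, |auxc α τ N| ≤ 1/2 →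
      (auxc α τ N)^2 * auxT α N
        = ∑ j ∈ Finset.Icc 1 (N/2), (auxc α τ N * (j:ℝ)^(-α))^2 := by
    intro N hN
    rw [auxT, Finset.mul_sum]
    refine Finset.sum_congr rfl fun j hj => ?_
    rw [mul_pow, (hjfacts N hN j hj).2]
  -- G + Q → 0
  have hGQ : Tendsto (fun N => auxG α τ N + (auxc α τ N)^2 * auxT α N) atTop (nhds 0) := by
    have ha : Tendsto (fun N => 2*(auxc α τ N)^2 * ((auxc α τ N)^2 * auxT α N))
        atTop (nhds 0) := by
      have := (hc2.const_mul 2).mul hQ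
      simpa using this
    refine squeeze_zero_norm' ?_ ha
    filter_upwards [hhalf] with N hN
    rw [hQsum N hN, auxG, ← Finset.sum_add_distrib]
    have hterm : ∀ j ∈ Finset.Icc 1 (N/2),
        |2 * Real.log (Real.cos (auxc α τ N * (j:ℝ)^(-α))) + (auxc α τ N * (j:ℝ)^(-α))^2|
          ≤ 2*(auxc α τ N)^2 * (auxc α τ N * (j:ℝ)^(-α))^2 := by
      intro j hj
      obtain ⟨hx, _⟩ := hjfacts N hN j hj
      refine (aux_logcos hx).trans ?_
      have h1 : (auxc α τ N * (j:ℝ)^(-α))^2 ≤ (auxc α τ N)^2 := by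
        rw [← sq_abs (auxc α τ N * _), ← sq_abs (auxc α τ N)]
        have := (hjfacts N hN j hj).1
        have h2 : |auxc α τ N * (j:ℝ)^(-α)| ≤ |auxc α τ N| := by
          rw [abs_mul]
          have hj1 : (1:ℝ) ≤ (j:ℝ) := by exact_mod_cast (Finset.mem_Icc.1 hj).1
          have hr1 : |(j:ℝ)^(-α)| ≤ 1 := by
            rw [abs_of_pos (Real.rpow_pos_of_pos (by linarith) _)]
            exact Real.rpow_le_one_of_one_le_of_nonpos hj1 (neg_nonpos.2 hα0)
          exact mul_le_of_le_one_right (abs_nonneg _) hr1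
        exact pow_le_pow_left₀ (abs_nonneg _) h2 2
      nlinarith [sq_nonneg (auxc α τ N * (j:ℝ)^(-α))]
    calc ‖∑ j ∈ Finset.Icc 1 (N/2),
          (2 * Real.log (Real.cos (auxc α τ N * (j:ℝ)^(-α))) + (auxc α τ N * (j:ℝ)^(-α))^2)‖
        ≤ ∑ j ∈ Finset.Icc 1 (N/2),
          |2 * Real.log (Real.cos (auxc α τ N * (j:ℝ)^(-α))) + (auxc α τ N * (j:ℝ)^(-α))^2| :=
          Finset.abs_sum_le_sum_abs _ _
      _ ≤ ∑ j ∈ Finset.Icc 1 (N/2), 2*(auxc α τ N)^2 * (auxc α τ N * (j:ℝ)^(-α))^2 :=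
          Finset.sum_le_sum hterm
      _ = 2*(auxc α τ N)^2 * ∑ j ∈ Finset.Icc 1 (N/2), (auxc α τ N * (j:ℝ)^(-α))^2 := by
          rw [Finset.mul_sum]
  -- G → -L
  have hG : Tendsto (auxG α τ) atTop (nhds (-(2*(1-α)^2*τ^2/(1-2*α)))) := by
    have := hGQ.sub hQ
    simp only [zero_sub] at this
    exact this.congr fun N => by ring
  -- conclude
  have hexp : Tendsto (fun N => Real.exp (auxG α τ N)) atTop
      (nhds (Real.exp (-2 * (1 - α) ^ 2 * τ ^ 2 / (1 - 2 * α)))) := by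
    have h := (Real.continuous_exp.tendsto _).comp hG
    rw [show -(2*(1-α)^2*τ^2/(1-2*α)) = -2 * (1 - α) ^ 2 * τ ^ 2 / (1 - 2 * α) by ring] at h
    exact h
  refine Tendsto.congr' ?_ hexp
  filter_upwards [hhalf] with N hN
  rw [auxG, Real.exp_sum, relaxProd]
  refine Finset.prod_congr rfl fun j hj => ?_
  have harg : 2 * kacNorm α N * (τ * Real.sqrt N) * (j:ℝ)^(-α) = auxc α τ N * (j:ℝ)^(-α) := by
    rw [show kacNorm α N = (2 * auxS α N)⁻¹ from rfl, auxc, mul_inv, div_eq_mul_inv]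
    ring
  rw [harg]
  obtain ⟨hx, -⟩ := hjfacts N hN j hj
  have hpi : (1:ℝ) < Real.pi / 2 * 2 := by linarith [Real.pi_gt_three]
  have habsx := abs_le.1 hx
  have hcos : 0 < Real.cos (auxc α τ N * (j:ℝ)^(-α)) := by
    apply Real.cos_pos_of_mem_Ioo
    constructor <;> [linarith [Real.pi_gt_three]; linarith [Real.pi_gt_three]]
  rw [two_mul, Real.exp_add, Real.exp_log hcos, sq]
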